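/- Projector distance via overlap: for a unit vector |n⟩ in a Hilbert space and an orthogonal projection P with ⟨n|P|n⟩ > 0, the trace-norm distance between |n⟩⟨n| and the normalized projected state P|n⟩⟨n|P / ⟨n|P|n⟩ equals 2√(⟨n|Q|n⟩), where Q = I - P. -/

import Mathlib

open scoped ComplexConjugate

private lemma key_identity {H : Type*} [NormedAddCommGroup H] [InnerProductSpace ℂ H]
    (u v x : H) (p q c : ℝ)
    (hp : p ≠ 0) (hq : q ≠ 0) (h1c : (1:ℝ)+c ≠ 0) (h1c' : (1:ℝ)-c ≠ 0)
    (hc2 : c^2 = q) (hpq : p + q = 1) :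
    (inner ℂ (u+v) x : ℂ) • (u+v) - ((p:ℂ))⁻¹ • ((inner ℂ u x : ℂ) • u)
      = (c:ℂ) • (((2*q*(1+c):ℝ):ℂ)⁻¹ •
          ((inner ℂ ((c:ℂ)•u + ((1+c:ℝ):ℂ)•v) x : ℂ) • ((c:ℂ)•u + ((1+c:ℝ):ℂ)•v)))
      - (c:ℂ) • (((2*q*(1-c):ℝ):ℂ)⁻¹ •
          ((inner ℂ ((c:ℂ)•u + ((c-1:ℝ):ℂ)•v) x : ℂ) • ((c:ℂ)•u + ((c-1:ℝ):ℂ)•v))) := by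
  have hc2' : (c:ℂ)^2 = (q:ℂ) := by exact_mod_cast congrArg (Complex.ofReal) hc2
  have hpq' : (p:ℂ) + (q:ℂ) = 1 := by exact_mod_cast congrArg (Complex.ofReal) hpq
  have hp' : (p:ℂ) ≠ 0 := by exact_mod_cast hp
  have hq' : (q:ℂ) ≠ 0 := by exact_mod_cast hq
  have h1c'' : (1:ℂ)+(c:ℂ) ≠ 0 := by exact_mod_cast h1c
  have h1c''' : (1:ℂ)-(c:ℂ) ≠ 0 := by exact_mod_cast h1c'
  simp only [inner_add_left, inner_smul_left, map_inv₀, Complex.conj_ofReal, smul_add, smul_smul]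
  push_cast
  match_scalars
  have hp2 : (p:ℂ) = 1 - (c:ℂ)^2 := by linear_combination hpq' + hc2'
  · field_simp
    rw [hp2, ← hc2']
    ring
  · field_simp
    rw [← hc2']
    ring

/-- Projector distance via overlap: for a unit vector `n` in a Hilbert space and an orthogonal
projection `P` with `⟨n|P|n⟩ > 0`, the trace-norm distance between `|n⟩⟨n|` and the normalized
projected state `P|n⟩⟨n|P / ⟨n|P|n⟩` equals `2 √⟨n|Q|n⟩`, where `Q = I - P`.
The trace norm of the (self-adjoint, rank ≤ 2) difference operator
`A x = ⟪n, x⟫ • n - ⟪n, P n⟫⁻¹ • (⟪P n, x⟫ • P n)` is expressed as the supremum over all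
finite orthonormal families `φ` of `∑ i |⟪φ i, A (φ i)⟫|`. -/
theorem projector_distance_via_overlap
    {H : Type*} [NormedAddCommGroup H] [InnerProductSpace ℂ H] [CompleteSpace H]
    (n : H) (hn : ‖n‖ = 1) (P : H →L[ℂ] H)
    (h_idem : P.comp P = P) (h_sa : IsSelfAdjoint P)
    (h_pos : 0 < (inner ℂ n (P n) : ℂ).re) :
    IsLUB
      {r : ℝ | ∃ (m : ℕ) (φ : Fin m → H), Orthonormal ℂ φ ∧
        r = ∑ i, ‖
          ((inner ℂ (φ i)
            ((inner ℂ n (φ i) : ℂ) • n -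
              ((inner ℂ n (P n) : ℂ))⁻¹ • ((inner ℂ (P n) (φ i) : ℂ) • P n))) : ℂ)‖}
      (2 * Real.sqrt ((inner ℂ n (n - P n) : ℂ).re)) := by
  classical
  have hsym : ∀ x y : H, (inner ℂ (P x) y : ℂ) = inner ℂ x (P y) := fun x y =>
    (ContinuousLinearMap.isSelfAdjoint_iff_isSymmetric.mp h_sa) x y
  have hPP : P (P n) = P n := by
    have := congrArg (fun T : H →L[ℂ] H => T n) h_idem
    simpa using this
  set p : ℝ := ‖P n‖^2 with hpdef
  set q : ℝ := ‖n - P n‖^2 with hqdef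
  have hPnPn : (inner ℂ (P n) (P n) : ℂ) = (p:ℂ) := by
    rw [inner_self_eq_norm_sq_to_K]; norm_cast
  have hip : (inner ℂ n (P n) : ℂ) = (p:ℂ) := by
    conv_lhs => rw [← hPP]
    rw [← hsym n (P n), hPnPn]
  have hPn_n : (inner ℂ (P n) n : ℂ) = (p:ℂ) := by rw [hsym n n, hip]
  have hvu0 : (inner ℂ (P n) (n - P n) : ℂ) = 0 := by
    rw [inner_sub_right, hPnPn, hPn_n, sub_self]
  have huv0 : (inner ℂ (n - P n) (P n) : ℂ) = 0 := by
    rw [inner_sub_left, hip, hPnPn, sub_self]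
  have hvv : (inner ℂ (n - P n) (n - P n) : ℂ) = (q:ℂ) := by
    rw [inner_self_eq_norm_sq_to_K]; norm_cast
  have hnsplit : P n + (n - P n) = n := by abel
  have hq_inner : (inner ℂ n (n - P n) : ℂ) = (q:ℂ) := by
    nth_rewrite 1 [← hnsplit]
    rw [inner_add_left, hvu0, hvv, zero_add]
  have hpq : p + q = 1 := by
    have h := @norm_add_sq ℂ _ _ _ _ (P n) (n - P n)
    rw [hnsplit, hn] at h
    have : RCLike.re (inner ℂ (P n) (n - P n) : ℂ) = 0 := by rw [hvu0]; simp
    rw [this] at h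
    rw [hpdef, hqdef]; linarith
  have hp_pos : 0 < p := by
    rw [hip] at h_pos; simpa using h_pos
  have hq_nonneg : 0 ≤ q := sq_nonneg _
  have hre : ((inner ℂ n (n - P n) : ℂ)).re = q := by rw [hq_inner]; simp
  rw [hre]
  by_cases hq0 : q = 0
  · -- degenerate case: P n = n, operator is zero
    have hvz : n - P n = 0 := by
      have : ‖n - P n‖ = 0 := by
        have := hqdef; rw [hq0] at this
        nlinarith [norm_nonneg (n - P n)]
      rwa [norm_eq_zero] at this
    have hPn : P n = n := (sub_eq_zero.mp hvz).symm
    have hp1 : (inner ℂ n (P n) : ℂ) = 1 := by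
      rw [hip]; norm_cast; linarith
    have hzero : ∀ x : H, ((inner ℂ n x : ℂ) • n -
        ((inner ℂ n (P n) : ℂ))⁻¹ • ((inner ℂ (P n) x : ℂ) • P n)) = 0 := by
      intro x
      rw [hp1, hPn]
      simp
    rw [hq0, Real.sqrt_zero, mul_zero]
    refine IsGreatest.isLUB ⟨⟨0, Fin.elim0, ?_, ?_⟩, ?_⟩
    · exact orthonormal_iff_ite.mpr (fun i => i.elim0)
    · simp
    · rintro r ⟨m, φ, hφ, rfl⟩
      simp only [hzero]
      simp
  -- main case : q > 0
  have hq_pos : 0 < q := lt_of_le_of_ne hq_nonneg (Ne.symm hq0)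
  set c : ℝ := Real.sqrt q with hcdef
  have hc2 : c^2 = q := Real.sq_sqrt hq_nonneg
  have hc_pos : 0 < c := Real.sqrt_pos.mpr hq_pos
  have hq_lt1 : q < 1 := by linarith
  have hc_lt1 : c < 1 := by nlinarith
  have h1c : (0:ℝ) < 1 + c := by linarith
  have h1c' : (0:ℝ) < 1 - c := by linarith
  set w1 : H := (c:ℂ)•(P n) + ((1+c:ℝ):ℂ)•(n - P n) with hw1def
  set w2 : H := (c:ℂ)•(P n) + ((c-1:ℝ):ℂ)•(n - P n) with hw2def
  set r1 : ℝ := 2*q*(1+c) with hr1def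
  set r2 : ℝ := 2*q*(1-c) with hr2def
  have hr1_pos : 0 < r1 := by positivity
  have hr2_pos : 0 < r2 := by rw [hr2def]; positivity
  set s1 : ℝ := Real.sqrt r1 with hs1def
  set s2 : ℝ := Real.sqrt r2 with hs2def
  have hs1_pos : 0 < s1 := Real.sqrt_pos.mpr hr1_pos
  have hs2_pos : 0 < s2 := Real.sqrt_pos.mpr hr2_pos
  have hs1sq : s1^2 = r1 := Real.sq_sqrt hr1_pos.le
  have hs2sq : s2^2 = r2 := Real.sq_sqrt hr2_pos.le
  have hs1c : ((s1:ℂ)) ≠ 0 := by exact_mod_cast hs1_pos.ne'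
  have hs2c : ((s2:ℂ)) ≠ 0 := by exact_mod_cast hs2_pos.ne'
  set φ1 : H := ((s1:ℂ))⁻¹ • w1 with hφ1def
  set φ2 : H := ((s2:ℂ))⁻¹ • w2 with hφ2def
  -- inner ℂ products of w's
  have hw11 : (inner ℂ w1 w1 : ℂ) = ((r1:ℝ):ℂ) := by
    simp only [hw1def, inner_add_left, inner_add_right, inner_smul_left, inner_smul_right,
      Complex.conj_ofReal, hPnPn, hvu0, huv0, hvv]
    push_cast
    have hc2' : (c:ℂ)^2 = (q:ℂ) := by exact_mod_cast congrArg (Complex.ofReal) hc2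
    have hpq' : (p:ℂ) + (q:ℂ) = 1 := by exact_mod_cast congrArg (Complex.ofReal) hpq
    rw [hr1def]; push_cast
    linear_combination ((q:ℂ)) * hpq' + ((p:ℂ) + (q:ℂ)) * hc2'
  have hw22 : (inner ℂ w2 w2 : ℂ) = ((r2:ℝ):ℂ) := by
    simp only [hw2def, inner_add_left, inner_add_right, inner_smul_left, inner_smul_right,
      Complex.conj_ofReal, hPnPn, hvu0, huv0, hvv]
    push_cast
    have hc2' : (c:ℂ)^2 = (q:ℂ) := by exact_mod_cast congrArg (Complex.ofReal) hc2
    have hpq' : (p:ℂ) + (q:ℂ) = 1 := by exact_mod_cast congrArg (Complex.ofReal) hpq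
    rw [hr2def]; push_cast
    linear_combination ((q:ℂ)) * hpq' + ((p:ℂ) + (q:ℂ)) * hc2'
  have hw12 : (inner ℂ w1 w2 : ℂ) = 0 := by
    simp only [hw1def, hw2def, inner_add_left, inner_add_right, inner_smul_left, inner_smul_right,
      Complex.conj_ofReal, hPnPn, hvu0, huv0, hvv]
    push_cast
    have hc2' : (c:ℂ)^2 = (q:ℂ) := by exact_mod_cast congrArg (Complex.ofReal) hc2
    have hpq' : (p:ℂ) + (q:ℂ) = 1 := by exact_mod_cast congrArg (Complex.ofReal) hpq
    linear_combination ((q:ℂ)) * hpq' + ((p:ℂ) + (q:ℂ)) * hc2'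
  have hw21 : (inner ℂ w2 w1 : ℂ) = 0 := by
    rw [← inner_conj_symm, hw12, map_zero]
  have hr1cast : ((r1:ℝ):ℂ) = (s1:ℂ)*(s1:ℂ) := by
    rw [← hs1sq]; push_cast; ring
  have hr2cast : ((r2:ℝ):ℂ) = (s2:ℂ)*(s2:ℂ) := by
    rw [← hs2sq]; push_cast; ring
  have hip11 : (inner ℂ φ1 φ1 : ℂ) = 1 := by
    rw [hφ1def, inner_smul_left, inner_smul_right, hw11, map_inv₀, Complex.conj_ofReal, hr1cast]
    field_simp
  have hip22 : (inner ℂ φ2 φ2 : ℂ) = 1 := by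
    rw [hφ2def, inner_smul_left, inner_smul_right, hw22, map_inv₀, Complex.conj_ofReal, hr2cast]
    field_simp
  have hip12 : (inner ℂ φ1 φ2 : ℂ) = 0 := by
    rw [hφ1def, hφ2def, inner_smul_left, inner_smul_right, hw12]
    simp
  have hip21 : (inner ℂ φ2 φ1 : ℂ) = 0 := by
    rw [hφ1def, hφ2def, inner_smul_left, inner_smul_right, hw21]
    simp
  have hON : Orthonormal ℂ ![φ1, φ2] := by
    rw [orthonormal_iff_ite]
    intro i j
    fin_cases i <;> fin_cases j <;>
      simp [hip11, hip12, hip21, hip22, -inner_self_eq_norm_sq_to_K]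
  have key : ∀ x : H, ((inner ℂ n x : ℂ) • n -
      ((inner ℂ n (P n) : ℂ))⁻¹ • ((inner ℂ (P n) x : ℂ) • P n))
      = (c:ℂ) • ((inner ℂ φ1 x : ℂ) • φ1) - (c:ℂ) • ((inner ℂ φ2 x : ℂ) • φ2) := by
    intro x
    have e1 : (c:ℂ) • ((inner ℂ φ1 x : ℂ) • φ1)
        = (c:ℂ) • (((2*q*(1+c):ℝ):ℂ)⁻¹ • ((inner ℂ w1 x : ℂ) • w1)) := by
      rw [hφ1def]
      simp only [inner_smul_left, map_inv₀, Complex.conj_ofReal, smul_smul]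
      rw [show ((2*q*(1+c):ℝ):ℂ) = (s1:ℂ)*(s1:ℂ) from by rw [← hr1def]; exact hr1cast]
      match_scalars
      field_simp
      try ring
    have e2 : (c:ℂ) • ((inner ℂ φ2 x : ℂ) • φ2)
        = (c:ℂ) • (((2*q*(1-c):ℝ):ℂ)⁻¹ • ((inner ℂ w2 x : ℂ) • w2)) := by
      rw [hφ2def]
      simp only [inner_smul_left, map_inv₀, Complex.conj_ofReal, smul_smul]
      rw [show ((2*q*(1-c):ℝ):ℂ) = (s2:ℂ)*(s2:ℂ) from by rw [← hr2def]; exact hr2cast]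
      match_scalars
      field_simp
      try ring
    have hk := key_identity (P n) (n - P n) x p q c hp_pos.ne' hq_pos.ne' h1c.ne' h1c'.ne' hc2 hpq
    rw [hnsplit, ← hw1def, ← hw2def] at hk
    rw [hip, hk, e1, e2]
  have hφ1norm : ‖φ1‖ = 1 := by have := hON.1 0; simpa using this
  have hφ2norm : ‖φ2‖ = 1 := by have := hON.1 1; simpa using this
  clear_value φ1 φ2
  refine IsGreatest.isLUB ⟨⟨2, ![φ1, φ2], hON, ?_⟩, ?_⟩
  · rw [Fin.sum_univ_two]
    simp only [Matrix.cons_val_zero, Matrix.cons_val_one, Matrix.head_cons]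
    rw [key φ1, key φ2]
    rw [inner_sub_right, inner_sub_right]
    simp only [inner_smul_right, hip11, hip12, hip21, hip22, mul_one, mul_zero, zero_mul, one_mul]
    rw [sub_zero, zero_sub]
    rw [norm_neg]
    rw [Complex.norm_real, Real.norm_eq_abs, abs_of_pos hc_pos]
    ring
  · rintro r ⟨m, φ, hφ, rfl⟩
    have hterm : ∀ i : Fin m, ‖((inner ℂ (φ i)
          ((inner ℂ n (φ i) : ℂ) • n -
            ((inner ℂ n (P n) : ℂ))⁻¹ • ((inner ℂ (P n) (φ i) : ℂ) • P n))) : ℂ)‖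
        ≤ c * ‖(inner ℂ (φ i) φ1 : ℂ)‖^2 + c * ‖(inner ℂ (φ i) φ2 : ℂ)‖^2 := by
      intro i
      rw [key (φ i)]
      have hval : (inner ℂ (φ i)
          ((c:ℂ) • ((inner ℂ φ1 (φ i) : ℂ) • φ1) - (c:ℂ) • ((inner ℂ φ2 (φ i) : ℂ) • φ2)) : ℂ)
          = ((c * ‖(inner ℂ (φ i) φ1 : ℂ)‖^2 - c * ‖(inner ℂ (φ i) φ2 : ℂ)‖^2 : ℝ) : ℂ) := by
        rw [inner_sub_right, inner_smul_right, inner_smul_right, inner_smul_right,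
          inner_smul_right]
        rw [← inner_conj_symm (φ i) φ1, ← inner_conj_symm (φ i) φ2]
        rw [Complex.sq_norm, Complex.sq_norm]
        rw [Complex.mul_conj, Complex.mul_conj, Complex.normSq_conj, Complex.normSq_conj]
        push_cast
        ring
      rw [hval, Complex.norm_real, Real.norm_eq_abs]
      have h1 : 0 ≤ c * ‖(inner ℂ (φ i) φ1 : ℂ)‖^2 := by positivity
      have h2 : 0 ≤ c * ‖(inner ℂ (φ i) φ2 : ℂ)‖^2 := by positivity
      exact abs_le.mpr ⟨by linarith, by linarith⟩
    calc ∑ i, ‖((inner ℂ (φ i)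
            ((inner ℂ n (φ i) : ℂ) • n -
              ((inner ℂ n (P n) : ℂ))⁻¹ • ((inner ℂ (P n) (φ i) : ℂ) • P n))) : ℂ)‖
        ≤ ∑ i, (c * ‖(inner ℂ (φ i) φ1 : ℂ)‖^2 + c * ‖(inner ℂ (φ i) φ2 : ℂ)‖^2) :=
          Finset.sum_le_sum (fun i _ => hterm i)
      _ = c * (∑ i, ‖(inner ℂ (φ i) φ1 : ℂ)‖^2) + c * (∑ i, ‖(inner ℂ (φ i) φ2 : ℂ)‖^2) := by
          rw [Finset.sum_add_distrib, Finset.mul_sum, Finset.mul_sum]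
      _ ≤ c * 1 + c * 1 := by
          have b1 := hφ.sum_inner_products_le φ1 (s := Finset.univ)
          have b2 := hφ.sum_inner_products_le φ2 (s := Finset.univ)
          rw [hφ1norm] at b1
          rw [hφ2norm] at b2
          norm_num at b1 b2
          exact add_le_add (mul_le_mul_of_nonneg_left b1 hc_pos.le)
            (mul_le_mul_of_nonneg_left b2 hc_pos.le)
      _ = 2 * c := by ring
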